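/- Let X ∈ ℝ^{n×d}, X' ∈ ℝ^{n'×d'} be matrices, w ∈ ℝ^n, w' ∈ ℝ^{n'}, v ∈ ℝ^d, v' ∈ ℝ^{d'} probability vectors, and L : ℝ×ℝ → ℝ any cost function. Then the infimum defining COOT(X,X',w,w',v,v') is attained at a pair (π^s, π^v) such that π^s is an extreme point of the convex set Π(w,w') and π^v is an extreme point of the convex set Π(v,v'). -/

import Mathlib

open Finset Matrix

/-- A probability vector: nonnegative entries summing to 1. -/
def IsProbVec {n : ℕ} (w : Fin n → ℝ) : Prop :=
  (∀ i, 0 ≤ w i) ∧ ∑ i, w i = 1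

/-- The transport polytope `Π(w, w')`. -/
def TransportPolytope {n n' : ℕ} (w : Fin n → ℝ) (w' : Fin n' → ℝ) :
    Set (Matrix (Fin n) (Fin n') ℝ) :=
  {π | (∀ i j, 0 ≤ π i j) ∧ (∀ i, ∑ j, π i j = w i) ∧ (∀ j, ∑ i, π i j = w' j)}

/-- The CO-Optimal Transport objective. -/
def cootCost {n d n' d' : ℕ} (L : ℝ → ℝ → ℝ)
    (X : Matrix (Fin n) (Fin d) ℝ) (X' : Matrix (Fin n') (Fin d') ℝ)
    (πs : Matrix (Fin n) (Fin n') ℝ) (πv : Matrix (Fin d) (Fin d') ℝ) : ℝ :=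
  ∑ i, ∑ j, ∑ k, ∑ l, L (X i k) (X' j l) * πs i j * πv k l

/-- The CO-Optimal Transport value. -/
noncomputable def COOT {n d n' d' : ℕ} (L : ℝ → ℝ → ℝ)
    (X : Matrix (Fin n) (Fin d) ℝ) (X' : Matrix (Fin n') (Fin d') ℝ)
    (w : Fin n → ℝ) (w' : Fin n' → ℝ) (v : Fin d → ℝ) (v' : Fin d' → ℝ) : ℝ :=
  sInf {r | ∃ πs ∈ TransportPolytope w w', ∃ πv ∈ TransportPolytope v v',
    r = cootCost L X X' πs πv}

/- ---------- auxiliary material ---------- -/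

instance instLCSMat {a b : ℕ} : LocallyConvexSpace ℝ (Matrix (Fin a) (Fin b) ℝ) :=
  inferInstanceAs (LocallyConvexSpace ℝ (Fin a → Fin b → ℝ))

lemma continuous_entry {a b : ℕ} (i : Fin a) (j : Fin b) :
    Continuous fun x : Matrix (Fin a) (Fin b) ℝ => x i j :=
  (continuous_apply j).comp (continuous_apply i)

/-- The "Frobenius inner product with `c`" functional as a continuous linear map. -/
noncomputable def frobCLM {a b : ℕ} (c : Matrix (Fin a) (Fin b) ℝ) :
    Matrix (Fin a) (Fin b) ℝ →L[ℝ] ℝ where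
  toFun x := ∑ i, ∑ j, c i j * x i j
  map_add' x y := by
    simp [Matrix.add_apply, mul_add, Finset.sum_add_distrib]
  map_smul' r x := by
    simp only [Matrix.smul_apply, smul_eq_mul, RingHom.id_apply, Finset.mul_sum]
    exact Finset.sum_congr rfl fun i _ => Finset.sum_congr rfl fun j _ => by ring
  cont := by
    show Continuous fun x : Matrix (Fin a) (Fin b) ℝ => ∑ i, ∑ j, c i j * x i j
    refine continuous_finset_sum _ fun i _ => continuous_finset_sum _ fun j _ => ?_
    exact continuous_const.mul (continuous_entry i j)

@[simp] lemma frobCLM_apply {a b : ℕ} (c x : Matrix (Fin a) (Fin b) ℝ) :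
    frobCLM c x = ∑ i, ∑ j, c i j * x i j := rfl

lemma polytope_nonempty {a b : ℕ} {w : Fin a → ℝ} {w' : Fin b → ℝ}
    (hw : IsProbVec w) (hw' : IsProbVec w') : (TransportPolytope w w').Nonempty := by
  refine ⟨fun i j => w i * w' j, fun i j => mul_nonneg (hw.1 i) (hw'.1 j), fun i => ?_, fun j => ?_⟩
  · show ∑ j, w i * w' j = w i
    rw [← Finset.mul_sum, hw'.2, mul_one]
  · show ∑ i, w i * w' j = w' j
    rw [← Finset.sum_mul, hw.2, one_mul]

lemma polytope_compact {a b : ℕ} {w : Fin a → ℝ} {w' : Fin b → ℝ}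
    (hw : IsProbVec w) : IsCompact (TransportPolytope w w') := by
  have hclosed : IsClosed (TransportPolytope w w') := by
    have hset : TransportPolytope w w' =
        (⋂ i, ⋂ j, {x : Matrix (Fin a) (Fin b) ℝ | 0 ≤ x i j}) ∩
        ((⋂ i, {x : Matrix (Fin a) (Fin b) ℝ | ∑ j, x i j = w i}) ∩
         (⋂ j, {x : Matrix (Fin a) (Fin b) ℝ | ∑ i, x i j = w' j})) := by
      ext x
      simp only [TransportPolytope, Set.mem_setOf_eq, Set.mem_inter_iff, Set.mem_iInter]
    rw [hset]
    refine IsClosed.inter ?_ (IsClosed.inter ?_ ?_)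
    · exact isClosed_iInter fun i => isClosed_iInter fun j =>
        isClosed_le continuous_const (continuous_entry i j)
    · exact isClosed_iInter fun i =>
        isClosed_eq (continuous_finset_sum _ fun j _ => continuous_entry i j) continuous_const
    · exact isClosed_iInter fun j =>
        isClosed_eq (continuous_finset_sum _ fun i _ => continuous_entry i j) continuous_const
  have hbox : IsCompact
      ((Set.univ.pi fun _ : Fin a => Set.univ.pi fun _ : Fin b => Set.Icc (0:ℝ) 1) :
        Set (Matrix (Fin a) (Fin b) ℝ)) :=
    isCompact_univ_pi fun _ => isCompact_univ_pi fun _ => isCompact_Icc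
  refine hbox.of_isClosed_subset hclosed ?_
  rintro x ⟨hpos, hrow, _⟩
  rw [Set.mem_univ_pi]
  intro i
  rw [Set.mem_univ_pi]
  intro j
  refine ⟨hpos i j, ?_⟩
  have h1 : x i j ≤ ∑ j', x i j' :=
    Finset.single_le_sum (fun j' _ => hpos i j') (Finset.mem_univ j)
  have h2 : w i ≤ ∑ i', w i' :=
    Finset.single_le_sum (fun i' _ => hw.1 i') (Finset.mem_univ i)
  calc x i j ≤ w i := by rw [← hrow i]; exact h1
    _ ≤ 1 := by rw [← hw.2]; exact h2

/-- A linear functional attains its minimum over a nonempty compact set at an extreme point. -/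
lemma exists_extreme_min {a b : ℕ} {s : Set (Matrix (Fin a) (Fin b) ℝ)}
    (hcomp : IsCompact s) (hne : s.Nonempty) (c : Matrix (Fin a) (Fin b) ℝ) :
    ∃ x ∈ Set.extremePoints ℝ s, ∀ y ∈ s, frobCLM c x ≤ frobCLM c y := by
  set l : Matrix (Fin a) (Fin b) ℝ →L[ℝ] ℝ := -(frobCLM c) with hl
  have hexp : IsExposed ℝ s (l.toExposed s) := ContinuousLinearMap.toExposed.isExposed
  obtain ⟨x0, hx0, hmin⟩ := hcomp.exists_isMinOn hne (frobCLM c).continuous.continuousOn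
  have hx0B : x0 ∈ l.toExposed s := by
    refine ⟨hx0, fun y hy => ?_⟩
    have := (isMinOn_iff.mp hmin) y hy
    simp only [hl, ContinuousLinearMap.neg_apply, neg_le_neg_iff]
    exact this
  obtain ⟨x, hx⟩ := (hexp.isCompact hcomp).extremePoints_nonempty ⟨x0, hx0B⟩
  refine ⟨x, hexp.isExtreme.extremePoints_subset_extremePoints hx, fun y hy => ?_⟩
  have hxB : x ∈ l.toExposed s := extremePoints_subset hx
  have := hxB.2 y hy
  simpa [hl, neg_le_neg_iff] using this

lemma sum4_comm {α β γ δ : Type*} [Fintype α] [Fintype β] [Fintype γ] [Fintype δ]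
    (f : α → β → γ → δ → ℝ) :
    ∑ i, ∑ j, ∑ k, ∑ l, f i j k l = ∑ k, ∑ l, ∑ i, ∑ j, f i j k l := by
  calc ∑ i, ∑ j, ∑ k, ∑ l, f i j k l
      = ∑ i, ∑ k, ∑ j, ∑ l, f i j k l :=
        Finset.sum_congr rfl fun i _ => Finset.sum_comm
    _ = ∑ k, ∑ i, ∑ j, ∑ l, f i j k l := Finset.sum_comm
    _ = ∑ k, ∑ i, ∑ l, ∑ j, f i j k l :=
        Finset.sum_congr rfl fun k _ => Finset.sum_congr rfl fun i _ => Finset.sum_comm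
    _ = ∑ k, ∑ l, ∑ i, ∑ j, f i j k l :=
        Finset.sum_congr rfl fun k _ => Finset.sum_comm

lemma coot_eq_frob_left {n d n' d' : ℕ} (L : ℝ → ℝ → ℝ)
    (X : Matrix (Fin n) (Fin d) ℝ) (X' : Matrix (Fin n') (Fin d') ℝ)
    (x : Matrix (Fin n) (Fin n') ℝ) (y : Matrix (Fin d) (Fin d') ℝ) :
    cootCost L X X' x y =
      frobCLM (fun i j => ∑ k, ∑ l, L (X i k) (X' j l) * y k l) x := by
  erw [frobCLM_apply]
  simp only [frobCLM_apply, cootCost, Finset.sum_mul]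
  exact Finset.sum_congr rfl fun i _ => Finset.sum_congr rfl fun j _ =>
    Finset.sum_congr rfl fun k _ => Finset.sum_congr rfl fun l _ => by ring

lemma coot_eq_frob_right {n d n' d' : ℕ} (L : ℝ → ℝ → ℝ)
    (X : Matrix (Fin n) (Fin d) ℝ) (X' : Matrix (Fin n') (Fin d') ℝ)
    (x : Matrix (Fin n) (Fin n') ℝ) (y : Matrix (Fin d) (Fin d') ℝ) :
    cootCost L X X' x y =
      frobCLM (fun k l => ∑ i, ∑ j, L (X i k) (X' j l) * x i j) y := by
  erw [frobCLM_apply]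
  simp only [frobCLM_apply, cootCost, Finset.sum_mul]
  rw [sum4_comm (f := fun i j k l => L (X i k) (X' j l) * x i j * y k l)]

theorem coot_attained_at_extreme_points {n d n' d' : ℕ}
    (X : Matrix (Fin n) (Fin d) ℝ) (X' : Matrix (Fin n') (Fin d') ℝ)
    (w : Fin n → ℝ) (w' : Fin n' → ℝ) (v : Fin d → ℝ) (v' : Fin d' → ℝ)
    (hw : IsProbVec w) (hw' : IsProbVec w') (hv : IsProbVec v) (hv' : IsProbVec v')
    (L : ℝ → ℝ → ℝ) :
    ∃ πs ∈ Set.extremePoints ℝ (TransportPolytope w w'),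
      ∃ πv ∈ Set.extremePoints ℝ (TransportPolytope v v'),
        cootCost L X X' πs πv = COOT L X X' w w' v v' := by
  set S := TransportPolytope w w' with hS
  set T := TransportPolytope v v' with hT
  have hSc : IsCompact S := polytope_compact hw
  have hTc : IsCompact T := polytope_compact hv
  have hSne : S.Nonempty := polytope_nonempty hw hw'
  have hTne : T.Nonempty := polytope_nonempty hv hv'
  -- joint continuity of the cost
  have hFcont : Continuous fun p : Matrix (Fin n) (Fin n') ℝ × Matrix (Fin d) (Fin d') ℝ =>
      cootCost L X X' p.1 p.2 := by
    unfold cootCost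
    refine continuous_finset_sum _ fun i _ => continuous_finset_sum _ fun j _ =>
      continuous_finset_sum _ fun k _ => continuous_finset_sum _ fun l _ => ?_
    exact (continuous_const.mul ((continuous_entry i j).comp continuous_fst)).mul
      ((continuous_entry k l).comp continuous_snd)
  -- global minimizer over the product
  obtain ⟨p0, hp0, hmin0⟩ := (hSc.prod hTc).exists_isMinOn (hSne.prod hTne)
    hFcont.continuousOn
  have hmin0' := isMinOn_iff.mp hmin0
  -- COOT equals the minimal value
  have hCOOT : COOT L X X' w w' v v' = cootCost L X X' p0.1 p0.2 := by
    have hleast : IsLeast {r | ∃ πs ∈ S, ∃ πv ∈ T, r = cootCost L X X' πs πv}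
        (cootCost L X X' p0.1 p0.2) := by
      constructor
      · exact ⟨p0.1, hp0.1, p0.2, hp0.2, rfl⟩
      · rintro r ⟨πs, hπs, πv, hπv, rfl⟩
        exact hmin0' (πs, πv) (Set.mk_mem_prod hπs hπv)
    exact hleast.csInf_eq
  -- replace the first marginal by an extreme-point minimizer
  obtain ⟨πs1, hπs1ext, hπs1min⟩ := exists_extreme_min hSc hSne
    (fun i j => ∑ k, ∑ l, L (X i k) (X' j l) * p0.2 k l)
  have h1le : cootCost L X X' πs1 p0.2 ≤ cootCost L X X' p0.1 p0.2 := by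
    rw [coot_eq_frob_left, coot_eq_frob_left]
    exact hπs1min p0.1 hp0.1
  have h1ge : cootCost L X X' p0.1 p0.2 ≤ cootCost L X X' πs1 p0.2 :=
    hmin0' (πs1, p0.2) (Set.mk_mem_prod (extremePoints_subset hπs1ext) hp0.2)
  have h1 : cootCost L X X' πs1 p0.2 = cootCost L X X' p0.1 p0.2 :=
    le_antisymm h1le h1ge
  -- replace the second marginal by an extreme-point minimizer
  obtain ⟨πv1, hπv1ext, hπv1min⟩ := exists_extreme_min hTc hTne
    (fun k l => ∑ i, ∑ j, L (X i k) (X' j l) * πs1 i j)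
  have h2le : cootCost L X X' πs1 πv1 ≤ cootCost L X X' πs1 p0.2 := by
    rw [coot_eq_frob_right, coot_eq_frob_right]
    exact hπv1min p0.2 hp0.2
  have h2ge : cootCost L X X' p0.1 p0.2 ≤ cootCost L X X' πs1 πv1 :=
    hmin0' (πs1, πv1) (Set.mk_mem_prod (extremePoints_subset hπs1ext)
      (extremePoints_subset hπv1ext))
  refine ⟨πs1, hπs1ext, πv1, hπv1ext, ?_⟩
  rw [hCOOT]
  exact le_antisymm (h2le.trans h1le) h2ge
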